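/- For symmetric positive definite matrices S and P₀ with tr(S) = τ and tr(P₀) = τ₀, one has tr((P₀^{1/2} S P₀^{1/2})^{1/2}) ≤ √(τ τ₀), with equality when S = (τ/τ₀) P₀. -/

import Mathlib

open Matrix

section

open scoped ComplexOrder

/-- The positive semidefinite square root of a positive semidefinite matrix
(Mathlib's former `Matrix.PosSemidef.sqrt`, removed since; same definition). -/
noncomputable def Matrix.PosSemidef.sqrt {n : Type*} [Fintype n] [DecidableEq n] {𝕜 : Type*}
    [RCLike 𝕜] {A : Matrix n n 𝕜} (hA : A.PosSemidef) : Matrix n n 𝕜 :=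
  hA.1.eigenvectorUnitary.1 * diagonal ((↑) ∘ (√·) ∘ hA.1.eigenvalues) *
    (star hA.1.eigenvectorUnitary : Matrix n n 𝕜)

end

private lemma psd_sqrt_eq_cfc {n : ℕ} {A : Matrix (Fin n) (Fin n) ℝ} (hA : A.PosSemidef) :
    hA.sqrt = cfc Real.sqrt A := by
  rw [hA.1.cfc_eq, IsHermitian.cfc, Unitary.conjStarAlgAut_apply]; rfl

private lemma psd_spec_nonneg {n : ℕ} {A : Matrix (Fin n) (Fin n) ℝ} (hA : A.PosSemidef) :
    ∀ x ∈ spectrum ℝ A, 0 ≤ x :=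
  fun _ hx => (posSemidef_iff_isHermitian_and_spectrum_nonneg.1 hA).2 hx

lemma Matrix.PosSemidef.posSemidef_sqrt {n : ℕ} {A : Matrix (Fin n) (Fin n) ℝ}
    (hA : A.PosSemidef) : hA.sqrt.PosSemidef := by
  open scoped MatrixOrder in
  rw [psd_sqrt_eq_cfc, ← nonneg_iff_posSemidef]
  exact cfc_nonneg (fun x _ => Real.sqrt_nonneg x)

lemma Matrix.PosSemidef.sqrt_mul_self {n : ℕ} {A : Matrix (Fin n) (Fin n) ℝ}
    (hA : A.PosSemidef) : hA.sqrt * hA.sqrt = A := by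
  have hsa : IsSelfAdjoint A := hA.1
  rw [psd_sqrt_eq_cfc, ← cfc_mul Real.sqrt Real.sqrt A]
  calc cfc (fun x => Real.sqrt x * Real.sqrt x) A = cfc (fun x : ℝ => x) A :=
        cfc_congr (fun x hx => Real.mul_self_sqrt (psd_spec_nonneg hA x hx))
    _ = A := cfc_id' ℝ A

lemma Matrix.PosSemidef.eq_sqrt_of_sq_eq {n : ℕ} {A B : Matrix (Fin n) (Fin n) ℝ}
    (hB : B.PosSemidef) (hA : A.PosSemidef) (h : B ^ 2 = A) : B = hA.sqrt := by
  have hsb : IsSelfAdjoint B := hB.1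
  rw [psd_sqrt_eq_cfc, ← h, ← cfc_comp_pow Real.sqrt 2 B]
  calc B = cfc (fun x : ℝ => x) B := (cfc_id' ℝ B).symm
    _ = _ := cfc_congr (fun x hx => (Real.sqrt_sq (psd_spec_nonneg hB x hx)).symm)

private lemma psd_smul' {n : ℕ} {c : ℝ} (hc : 0 ≤ c) {A : Matrix (Fin n) (Fin n) ℝ}
    (h : A.PosSemidef) : (c • A).PosSemidef := by
  exact h.smul hc

private lemma trace_nonneg' {n : ℕ} {A : Matrix (Fin n) (Fin n) ℝ} (h : A.PosSemidef) :
    0 ≤ A.trace := by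
  exact h.trace_nonneg

private lemma trace_pos' {n : ℕ} (hn : 0 < n) {A : Matrix (Fin n) (Fin n) ℝ} (h : A.PosDef) :
    0 < A.trace := by
  haveI : Nonempty (Fin n) := ⟨⟨0, hn⟩⟩
  exact h.trace_pos

private lemma trace_mul_sum' {n : ℕ} (A B : Matrix (Fin n) (Fin n) ℝ) :
    (A * B).trace = ∑ p : Fin n × Fin n, A p.1 p.2 * B p.2 p.1 := by
  rw [← Finset.univ_product_univ, Finset.sum_product]
  simp [Matrix.trace, Matrix.mul_apply, Matrix.diag]

/-- For SPD `S, P₀` with `tr S = τ`, `tr P₀ = τ₀`: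
`tr((P₀^{1/2} S P₀^{1/2})^{1/2}) ≤ √(τ τ₀)`, with equality when `S = (τ/τ₀) P₀`. -/
theorem stmt4 {n : ℕ} (S P₀ : Matrix (Fin n) (Fin n) ℝ)
    (hS : S.PosDef) (hP₀ : P₀.PosDef) (τ τ₀ : ℝ)
    (hτ : S.trace = τ) (hτ₀ : P₀.trace = τ₀)
    (hmid : (hP₀.posSemidef.sqrt * S * hP₀.posSemidef.sqrt).PosSemidef) :
    hmid.sqrt.trace ≤ Real.sqrt (τ * τ₀) ∧
      (S = (τ / τ₀) • P₀ → hmid.sqrt.trace = Real.sqrt (τ * τ₀)) := by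
  set Q : Matrix (Fin n) (Fin n) ℝ := hP₀.posSemidef.sqrt with hQdef
  set T : Matrix (Fin n) (Fin n) ℝ := hmid.sqrt with hTdef
  have hQpsd : Q.PosSemidef := hP₀.posSemidef.posSemidef_sqrt
  have hQsym : Qᵀ = Q := hQpsd.1
  have hTpsd : T.PosSemidef := hmid.posSemidef_sqrt
  have hTsym : Tᵀ = T := hTpsd.1
  have hQQ : Q * Q = P₀ := hP₀.posSemidef.sqrt_mul_self
  have hTT : T * T = Q * S * Q := hmid.sqrt_mul_self
  -- invertibility of Q
  have hQdet : IsUnit Q.det := by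
    have hdd : Q.det * Q.det = P₀.det := by rw [← det_mul, hQQ]
    have hd : P₀.det ≠ 0 := ne_of_gt hP₀.det_pos
    exact isUnit_iff_ne_zero.2 (fun h0 => hd (by rw [← hdd, h0, zero_mul]))
  set R : Matrix (Fin n) (Fin n) ℝ := Q⁻¹ with hRdef
  have hQR : Q * R = 1 := Matrix.mul_nonsing_inv Q hQdet
  have hRQ : R * Q = 1 := Matrix.nonsing_inv_mul Q hQdet
  have hRsym : Rᵀ = R := by rw [hRdef, Matrix.transpose_nonsing_inv, hQsym]
  -- the three trace computations
  have key1 : ((R * T) * Q).trace = T.trace := by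
    rw [Matrix.trace_mul_comm, ← Matrix.mul_assoc, hQR, Matrix.one_mul]
  have hprod : (R * T) * (R * T)ᵀ = S := by
    rw [Matrix.transpose_mul, hTsym, hRsym]
    have h1 : R * T * (T * R) = R * (T * T) * R := by noncomm_ring
    rw [h1, hTT]
    calc R * (Q * S * Q) * R = (R * Q) * S * (Q * R) := by noncomm_ring
      _ = S := by rw [hRQ, hQR, Matrix.one_mul, Matrix.mul_one]
  have key3 : (Q * Qᵀ).trace = τ₀ := by rw [hQsym, hQQ, hτ₀]
  -- Cauchy-Schwarz
  have hCS : T.trace ^ 2 ≤ τ * τ₀ := by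
    have hcs := Finset.sum_mul_sq_le_sq_mul_sq Finset.univ
      (fun p : Fin n × Fin n => (R * T) p.1 p.2) (fun p : Fin n × Fin n => Q p.1 p.2)
    have e1 : ∑ p : Fin n × Fin n, (R * T) p.1 p.2 * Q p.1 p.2 = T.trace := by
      rw [← key1, trace_mul_sum']
      refine Finset.sum_congr rfl fun p _ => ?_
      rw [show Q p.2 p.1 = Qᵀ p.1 p.2 from rfl, hQsym]
    have e2 : ∑ p : Fin n × Fin n, (R * T) p.1 p.2 ^ 2 = τ := by
      have := trace_mul_sum' (R * T) (R * T)ᵀ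
      rw [hprod, hτ] at this
      rw [this]
      refine Finset.sum_congr rfl fun p _ => ?_
      rw [sq]; rfl
    have e3 : ∑ p : Fin n × Fin n, Q p.1 p.2 ^ 2 = τ₀ := by
      rw [← key3, trace_mul_sum']
      refine Finset.sum_congr rfl fun p _ => ?_
      rw [sq]; rfl
    rwa [e1, e2, e3] at hcs
  have hTtr : 0 ≤ T.trace := trace_nonneg' hTpsd
  constructor
  · rcases le_or_gt (τ * τ₀) 0 with h | h
    · have h2 : T.trace ^ 2 ≤ 0 := hCS.trans h
      have h3 : T.trace = 0 := by nlinarith [sq_nonneg T.trace]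
      rw [h3]; exact Real.sqrt_nonneg _
    · exact (Real.le_sqrt hTtr h.le).2 hCS
  · intro hSeq
    rcases Nat.eq_zero_or_pos n with hn | hn
    · subst hn
      have hτ0 : τ = 0 := by rw [← hτ]; simp [Matrix.trace]
      have hτ₀0 : τ₀ = 0 := by rw [← hτ₀]; simp [Matrix.trace]
      simp [Matrix.trace, hτ0, hτ₀0]
    · have hτpos : 0 < τ := hτ ▸ trace_pos' hn hS
      have hτ₀pos : 0 < τ₀ := hτ₀ ▸ trace_pos' hn hP₀
      set c : ℝ := Real.sqrt (τ / τ₀) with hc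
      have hcnn : 0 ≤ c := Real.sqrt_nonneg _
      have hcsq : c ^ 2 = τ / τ₀ := Real.sq_sqrt (le_of_lt (div_pos hτpos hτ₀pos))
      have hcP : (c • P₀).PosSemidef := psd_smul' hcnn hP₀.posSemidef
      have hsq : (c • P₀) ^ 2 = Q * S * Q := by
        rw [smul_pow, hcsq, hSeq]
        rw [Matrix.mul_smul, Matrix.smul_mul]
        congr 1
        rw [sq, ← hQQ]
        noncomm_ring
      have hTeq : T = c • P₀ := (hcP.eq_sqrt_of_sq_eq hmid hsq).symm
      rw [hTeq, Matrix.trace_smul, hτ₀]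
      have hmm : τ * τ₀ = (τ / τ₀) * τ₀ ^ 2 := by field_simp
      rw [smul_eq_mul, hc, hmm, Real.sqrt_mul (div_pos hτpos hτ₀pos).le,
        Real.sqrt_sq hτ₀pos.le]
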